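/- For every integer s with 1 ≤ s ≤ M−1 and every p with 0 < p < 1, the expected age strictly exceeds its value at p = 1: A(s) > (s+1)/2. (Equivalently, A(s,1) = (1/s)·Σ_{i=1}^{s} i = (s+1)/2 and A(s,1) < A(s,p) for all 0 < p < 1.) -/

import Mathlib

open Finset

/-- Expected age of the threshold-`s` aging-control policy: the mean of the
stationary age distribution of the threshold-`s` chain. -/
noncomputable def Aage (M : ℕ) (p : ℝ) (s : ℕ) : ℝ :=
  ((s : ℝ) + (1 - p) / p)⁻¹ *
    ((∑ i ∈ Finset.Icc 1 s, (i : ℝ))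
      + (∑ i ∈ Finset.Icc (s + 1) (M - 1), (i : ℝ) * (1 - p) ^ (i - s))
      + (M : ℝ) * (1 - p) ^ (M - s) / p)

/-- For `0 < p < 1`, the expected age strictly exceeds its value at `p = 1`,
namely `(1/s)·Σ_{i=1}^{s} i = (s+1)/2`. -/
theorem expected_age_gt_perfect_coverage (M s : ℕ) (p : ℝ)
    (hM : 2 ≤ M) (hp : 0 < p) (hp1 : p < 1)
    (hs1 : 1 ≤ s) (hsM : s ≤ M - 1) :
    ((s : ℝ) + 1) / 2 < Aage M p s := by
  have hq0 : (0:ℝ) < 1 - p := by linarith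
  unfold Aage
  set q : ℝ := 1 - p with hq
  set n : ℕ := M - 1 - s with hn
  have hMs : M - s = n + 1 := by omega
  have hsc : (1:ℝ) ≤ (s:ℝ) := by exact_mod_cast hs1
  have hD : (0:ℝ) < (s:ℝ) + q / p := by
    have : 0 < q / p := div_pos hq0 hp
    linarith
  rw [inv_mul_eq_div, lt_div_iff₀ hD]
  -- Gauss sum
  have hS : ∀ m : ℕ, ∑ i ∈ Icc 1 m, (i:ℝ) = (m:ℝ) * ((m:ℝ) + 1) / 2 := by
    intro m
    induction m with
    | zero => simp
    | succ k ih =>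
      rw [Finset.sum_Icc_succ_top (by omega), ih]
      push_cast; ring
  -- geometric sum
  have geo : ∀ m : ℕ, p * ∑ j ∈ Icc 1 m, q ^ j = q - q ^ (m + 1) := by
    intro m
    induction m with
    | zero => simp
    | succ k ih =>
      rw [Finset.sum_Icc_succ_top (by omega), mul_add, ih]
      have hpq : p = 1 - q := by rw [hq]; ring
      rw [hpq]; ring
  have hG : ∑ j ∈ Icc 1 n, q ^ j = (q - q ^ (n + 1)) / p := by
    rw [eq_div_iff hp.ne', mul_comm]; exact geo n
  -- reindex
  have hIcc : Icc (s+1) (M-1) = (Icc 1 n).map (addLeftEmbedding s) := by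
    rw [Finset.map_add_left_Icc]
    congr 1 <;> omega
  have reidx : ∑ i ∈ Icc (s + 1) (M - 1), (q : ℝ) ^ (i - s)
      = (q - q ^ (n + 1)) / p := by
    rw [hIcc, Finset.sum_map, ← hG]
    apply Finset.sum_congr rfl
    intro j hj
    simp [addLeftEmbedding_apply]
  -- lower bound the middle sum
  have hT : ((s:ℝ) + 1) * ((q - q ^ (n + 1)) / p)
      ≤ ∑ i ∈ Icc (s + 1) (M - 1), (i:ℝ) * q ^ (i - s) := by
    rw [← reidx, Finset.mul_sum]
    apply Finset.sum_le_sum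
    intro i hi
    have hi' := (Finset.mem_Icc.mp hi).1
    have : ((s:ℝ) + 1) ≤ (i:ℝ) := by exact_mod_cast hi'
    have hqpow : (0:ℝ) ≤ q ^ (i - s) := le_of_lt (pow_pos hq0 _)
    nlinarith
  -- lower bound the last term
  have hMc : ((s:ℝ) + 1) ≤ (M:ℝ) := by
    have : s + 1 ≤ M := by omega
    exact_mod_cast this
  have hC : ((s:ℝ) + 1) * q ^ (n + 1) / p ≤ (M:ℝ) * q ^ (M - s) / p := by
    rw [hMs]
    gcongr
  -- key inequality
  have hsum : ((s:ℝ)+1) * ((q - q^(n+1))/p) + ((s:ℝ)+1) * q^(n+1)/p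
      = ((s:ℝ)+1) * (q/p) := by
    field_simp
    ring
  have key : ((s:ℝ) + 1) / 2 * ((s:ℝ) + q / p)
      < (s:ℝ) * ((s:ℝ) + 1) / 2 + ((s:ℝ)+1) * ((q - q^(n+1))/p)
        + ((s:ℝ)+1) * q^(n+1)/p := by
    have hqp : 0 < q / p := div_pos hq0 hp
    have h1 : ((s:ℝ)+1)/2 * (q/p) < ((s:ℝ)+1) * (q/p) := by nlinarith
    have h2 : ((s:ℝ) + 1) / 2 * ((s:ℝ) + q / p)
        = (s:ℝ) * ((s:ℝ) + 1) / 2 + ((s:ℝ)+1)/2 * (q/p) := by ring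
    rw [h2]
    linarith [hsum]
  rw [hS s]
  linarith
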